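/- Let ν be a nonzero Lévy measure on ℝ^d. Then there exist a Borel measure λ on the unit sphere S = {ξ ∈ ℝ^d : |ξ| = 1} with 0 < λ(S) ≤ ∞ and a family {ν_ξ : ξ ∈ S} of Borel measures on (0,∞) such that ξ ↦ ν_ξ(B) is measurable for every Borel set B ⊆ (0,∞), 0 < ν_ξ((0,∞)) ≤ ∞ for every ξ ∈ S, and ν(B) = ∫_S (∫₀^∞ 1_B(rξ) ν_ξ(dr)) λ(dξ) for every Borel set B ⊆ ℝ^d ∖ {0}. -/

import Mathlib

open MeasureTheory
open scoped ENNReal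

/-- Polar decomposition of Lévy measures: every nonzero Lévy measure `ν` on `ℝ^d`
admits a decomposition `ν(B) = ∫_S ∫₀^∞ 1_B(rξ) ν_ξ(dr) λ(dξ)`. -/
theorem stmt_0 (d : ℕ) (hd : 1 ≤ d)
    (ν : Measure (EuclideanSpace ℝ (Fin d)))
    (hν0 : ν {0} = 0)
    (hνfin : ∫⁻ x, ENNReal.ofReal (min (‖x‖ ^ 2) 1) ∂ν < ⊤)
    (hνne : ν ≠ 0) :
    ∃ (lam : Measure (Metric.sphere (0 : EuclideanSpace ℝ (Fin d)) 1))
      (νxi : Metric.sphere (0 : EuclideanSpace ℝ (Fin d)) 1 → Measure ℝ),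
      0 < lam Set.univ ∧
      (∀ ξ, νxi ξ (Set.Ioi (0 : ℝ))ᶜ = 0) ∧
      (∀ B : Set ℝ, MeasurableSet B → Measurable fun ξ => νxi ξ B) ∧
      (∀ ξ, 0 < νxi ξ (Set.Ioi (0 : ℝ))) ∧
      (∀ B : Set (EuclideanSpace ℝ (Fin d)), MeasurableSet B → B ⊆ {0}ᶜ →
        ν B = ∫⁻ ξ, ∫⁻ r in Set.Ioi (0 : ℝ),
          B.indicator (fun _ => (1 : ℝ≥0∞)) (r • (ξ : EuclideanSpace ℝ (Fin d)))
            ∂(νxi ξ) ∂lam) := by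
  classical
  haveI : Nonempty (Fin d) := ⟨⟨0, hd⟩⟩
  set E := EuclideanSpace ℝ (Fin d)
  set S := Metric.sphere (0 : E) 1 with hS
  -- weight function
  set w : E → ℝ≥0∞ := fun x => ENNReal.ofReal (min (‖x‖ ^ 2) 1) with hw
  have hwmeas : Measurable w := by
    apply Measurable.ennreal_ofReal
    exact ((continuous_norm.pow 2).min continuous_const).measurable
  have hw0 : w 0 = 0 := by simp [hw]
  have hwne : ∀ x : E, x ≠ 0 → w x ≠ 0 ∧ w x ≠ ⊤ := by
    intro x hx
    constructor
    · simp only [hw, ne_eq, ENNReal.ofReal_eq_zero, not_le]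
      exact lt_min (pow_pos (norm_pos_iff.mpr hx) 2) one_pos
    · exact ENNReal.ofReal_ne_top
  set μ : Measure E := ν.withDensity w with hμ
  haveI hμfin : IsFiniteMeasure μ := by
    refine ⟨?_⟩
    rw [hμ, withDensity_apply _ MeasurableSet.univ, setLIntegral_univ]
    exact hνfin
  -- base point on the sphere
  haveI : Nontrivial E := by
    refine ⟨0, EuclideanSpace.single ⟨0, hd⟩ (1:ℝ), ?_⟩
    intro h
    have h2 := congrArg norm h
    rw [EuclideanSpace.norm_single] at h2
    simp at h2
  obtain ⟨ξ₀, hξ₀⟩ : S.Nonempty := NormedSpace.sphere_nonempty.mpr zero_le_one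
  -- projection to the sphere
  set g : E → E := fun x => if x = 0 then ξ₀ else ‖x‖⁻¹ • x with hg
  have hg_mem : ∀ x, g x ∈ S := by
    intro x
    by_cases h : x = 0
    · simpa [hg, h] using hξ₀
    · simp only [hg, h, if_false, hS, mem_sphere_zero_iff_norm, norm_smul, norm_inv, norm_norm]
      simp only [Real.norm_eq_abs]
      rw [abs_of_nonneg (norm_nonneg _)]
      exact inv_mul_cancel₀ (norm_ne_zero_iff.mpr h)
  have hg_meas : Measurable g := by
    refine Measurable.ite (measurableSet_singleton 0) measurable_const ?_
    exact (measurable_norm.inv).smul measurable_id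
  set f : E → S × ℝ := fun x => (⟨g x, hg_mem x⟩, ‖x‖) with hf
  have hf_meas : Measurable f := (hg_meas.subtype_mk).prodMk measurable_norm
  set ρ : Measure (S × ℝ) := μ.map f with hρ
  haveI : IsFiniteMeasure ρ := by
    refine ⟨?_⟩
    rw [hρ, Measure.map_apply hf_meas MeasurableSet.univ]
    exact measure_lt_top μ _
  set lam : Measure S := ρ.fst with hlam
  set κ := ρ.condKernel with hκ
  -- density on (0,∞)
  set G : ℝ → ℝ≥0∞ := fun r => (ENNReal.ofReal (min (r ^ 2) 1))⁻¹ with hG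
  have hGmeas : Measurable G := by
    apply Measurable.inv
    apply Measurable.ennreal_ofReal
    exact ((continuous_pow 2).min continuous_const).measurable
  have hGone : ∀ r : ℝ, 1 ≤ G r := by
    intro r
    rw [hG]
    simp only [ENNReal.le_inv_iff_mul_le, one_mul]
    exact ENNReal.ofReal_le_one.mpr (min_le_right _ _)
  set bad : Set S := {ξ | κ ξ (Set.Ioi (0:ℝ)) = 0} with hbad
  have hbad_meas : MeasurableSet bad :=
    (ProbabilityTheory.Kernel.measurable_coe κ measurableSet_Ioi) (measurableSet_singleton 0)
  set νxi : S → Measure ℝ := fun ξ =>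
    if κ ξ (Set.Ioi (0:ℝ)) = 0 then volume.restrict (Set.Ioo 0 1)
    else ((κ ξ).withDensity G).restrict (Set.Ioi 0) with hνxi
  refine ⟨lam, νxi, ?_, ?_, ?_, ?_, ?_⟩
  · -- lam univ > 0
    have h1 : lam Set.univ = μ Set.univ := by
      rw [hlam, Measure.fst_univ, hρ, Measure.map_apply hf_meas MeasurableSet.univ,
        Set.preimage_univ]
    rw [h1]
    rcases eq_or_ne (μ Set.univ) 0 with h | h
    · exfalso
      rw [hμ, withDensity_apply _ MeasurableSet.univ, setLIntegral_univ,
        lintegral_eq_zero_iff hwmeas] at h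
      apply hνne
      rw [← Measure.measure_univ_eq_zero]
      have hsub : (Set.univ : Set E) ⊆ {0} ∪ {x : E | w x = 0}ᶜ := by
        intro x _
        by_cases hx : x = 0
        · exact Or.inl hx
        · exact Or.inr ((hwne x hx).1)
      refine le_antisymm ?_ (by simp)
      calc ν Set.univ ≤ ν ({0} ∪ {x : E | w x = 0}ᶜ) := measure_mono hsub
        _ ≤ ν {0} + ν {x : E | w x = 0}ᶜ := measure_union_le _ _
        _ = 0 := by
            rw [hν0]
            rw [zero_add]
            exact ae_iff.mp h
    · exact pos_iff_ne_zero.mpr h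
  · -- νxi ξ (Ioi 0)ᶜ = 0
    intro ξ
    simp only [hνxi]
    split_ifs with h
    · rw [Measure.restrict_apply measurableSet_Ioi.compl]
      have : (Set.Ioi (0:ℝ))ᶜ ∩ Set.Ioo 0 1 = ∅ := by
        ext r
        simp only [Set.mem_inter_iff, Set.mem_compl_iff, Set.mem_Ioi, Set.mem_Ioo,
          Set.mem_empty_iff_false, iff_false]
        rintro ⟨h1, h2, h3⟩
        exact h1 h2
      rw [this]; simp
    · rw [Measure.restrict_apply measurableSet_Ioi.compl, Set.compl_inter_self]; simp
  · -- measurability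
    intro B hB
    have key : (fun ξ => νxi ξ B) = fun ξ =>
        if κ ξ (Set.Ioi (0:ℝ)) = 0 then volume.restrict (Set.Ioo 0 1) B
        else ∫⁻ r, (B ∩ Set.Ioi 0).indicator G r ∂(κ ξ) := by
      funext ξ
      simp only [hνxi]
      split_ifs with h
      · rfl
      · rw [Measure.restrict_apply hB,
          withDensity_apply _ (hB.inter measurableSet_Ioi),
          ← lintegral_indicator (hB.inter measurableSet_Ioi)]
    rw [key]
    refine Measurable.ite hbad_meas measurable_const ?_
    exact Measurable.lintegral_kernel_prod_right' (κ := κ)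
      ((hGmeas.indicator (hB.inter measurableSet_Ioi)).comp measurable_snd)
  · -- positivity
    intro ξ
    simp only [hνxi]
    split_ifs with h
    · rw [Measure.restrict_apply measurableSet_Ioi]
      have : Set.Ioi (0:ℝ) ∩ Set.Ioo 0 1 = Set.Ioo 0 1 := by
        ext r; simp only [Set.mem_inter_iff, Set.mem_Ioi, Set.mem_Ioo, and_iff_right_iff_imp]
        exact fun h => h.1
      rw [this, Real.volume_Ioo]
      norm_num
    · rw [Measure.restrict_apply measurableSet_Ioi, Set.inter_self,
        withDensity_apply _ measurableSet_Ioi]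
      have h1 : κ ξ (Set.Ioi 0) ≤ ∫⁻ r in Set.Ioi (0:ℝ), G r ∂(κ ξ) := by
        calc κ ξ (Set.Ioi 0) = ∫⁻ _ in Set.Ioi (0:ℝ), 1 ∂(κ ξ) := (setLIntegral_one _).symm
          _ ≤ ∫⁻ r in Set.Ioi (0:ℝ), G r ∂(κ ξ) :=
            setLIntegral_mono hGmeas fun r _ => hGone r
      exact lt_of_lt_of_le (pos_iff_ne_zero.mpr h) h1
  · -- main identity
    intro B hB hB0
    have h0B : (0:E) ∉ B := fun h => (hB0 h) rfl
    set F : S × ℝ → ℝ≥0∞ :=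
      fun p => B.indicator (fun _ => (1:ℝ≥0∞)) (p.2 • (p.1 : E)) * G p.2 with hF
    have hsmul : Measurable fun p : S × ℝ => p.2 • (p.1 : E) :=
      (continuous_snd.smul (continuous_subtype_val.comp continuous_fst)).measurable
    have hFmeas : Measurable F := by
      apply Measurable.mul
      · exact (measurable_const.indicator hB).comp hsmul
      · exact hGmeas.comp measurable_snd
    have hcomp : ρ = lam.compProd κ := (ρ.disintegrate ρ.condKernel).symm
    -- a.e. the kernel lives on (0,∞)
    have hnull : ∀ᵐ ξ ∂lam, κ ξ ((Set.Ioi (0:ℝ))ᶜ) = 0 := by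
      have hint : ∫⁻ ξ, κ ξ ((Set.Ioi (0:ℝ))ᶜ) ∂lam = 0 := by
        have h1 : ρ (Set.univ ×ˢ (Set.Ioi (0:ℝ))ᶜ)
            = ∫⁻ ξ, κ ξ ((Set.Ioi (0:ℝ))ᶜ) ∂lam := by
          rw [hcomp, Measure.compProd_apply (MeasurableSet.univ.prod measurableSet_Ioi.compl)]
          refine lintegral_congr fun ξ => ?_
          congr 1
          ext r
          simp
        have hpre : f ⁻¹' (Set.univ ×ˢ (Set.Ioi (0:ℝ))ᶜ) = {0} := by
          ext x
          simp only [hf, Set.mem_preimage, Set.mem_prod, Set.mem_univ, true_and,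
            Set.mem_compl_iff, Set.mem_Ioi, not_lt, Set.mem_singleton_iff]
          exact norm_le_zero_iff
        rw [← h1, hρ, Measure.map_apply hf_meas
          (MeasurableSet.univ.prod measurableSet_Ioi.compl), hpre, hμ,
          withDensity_apply _ (measurableSet_singleton 0),
          Measure.restrict_eq_zero.mpr hν0, lintegral_zero_measure]
      have := (lintegral_eq_zero_iff
        (ProbabilityTheory.Kernel.measurable_coe κ measurableSet_Ioi.compl)).mp hint
      filter_upwards [this] with ξ hξ using hξ
    have hinner : ∀ᵐ ξ ∂lam,
        (∫⁻ r in Set.Ioi (0:ℝ),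
          B.indicator (fun _ => (1:ℝ≥0∞)) (r • (ξ:E)) ∂(νxi ξ))
        = ∫⁻ r, F (ξ, r) ∂(κ ξ) := by
      filter_upwards [hnull] with ξ hξ
      have hpos : κ ξ (Set.Ioi 0) ≠ 0 := by
        intro hz
        have hle : κ ξ Set.univ ≤ κ ξ (Set.Ioi 0) + κ ξ ((Set.Ioi (0:ℝ))ᶜ) := by
          rw [← Set.union_compl_self (Set.Ioi (0:ℝ))]
          exact measure_union_le _ _
        rw [hz, hξ, add_zero, measure_univ] at hle
        exact (by norm_num : ¬ ((1:ℝ≥0∞) ≤ 0)) hle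
      have hres : νxi ξ = ((κ ξ).withDensity G).restrict (Set.Ioi 0) := by
        simp only [hνxi]
        rw [if_neg hpos]
      have hhmeas : Measurable fun r : ℝ =>
          B.indicator (fun _ => (1:ℝ≥0∞)) (r • (ξ:E)) :=
        (measurable_const.indicator hB).comp
          ((continuous_id.smul continuous_const).measurable)
      rw [hres, Measure.restrict_restrict measurableSet_Ioi, Set.inter_self,
        restrict_withDensity measurableSet_Ioi,
        lintegral_withDensity_eq_lintegral_mul _ hGmeas hhmeas,
        Measure.restrict_eq_self_of_ae_mem ?_]
      · refine lintegral_congr fun r => ?_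
        simp only [hF, Pi.mul_apply]
        ring
      · rw [ae_iff]
        simp at hξ ⊢
        exact hξ
    calc ν B = ∫⁻ x, B.indicator (fun _ => (1:ℝ≥0∞)) x ∂ν := by
          rw [lintegral_indicator hB, setLIntegral_one]
      _ = ∫⁻ x, (w * fun x => F (f x)) x ∂ν := by
          refine lintegral_congr fun x => ?_
          by_cases hx : x = 0
          · subst hx
            simp only [Pi.mul_apply, hw0, zero_mul]
            exact (Set.indicator_of_notMem h0B _)
          · have hgx : g x = ‖x‖⁻¹ • x := by
              simp only [hg]
              rw [if_neg hx]
            have hsm : ‖x‖ • g x = x := by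
              rw [hgx, smul_smul, mul_inv_cancel₀ (norm_ne_zero_iff.mpr hx), one_smul]
            have hGw : w x * G ‖x‖ = 1 := by
              simp only [hw, hG, norm_norm]
              exact ENNReal.mul_inv_cancel (hwne x hx).1 (hwne x hx).2
            simp only [Pi.mul_apply, hF, hf]
            rw [hsm]
            rw [mul_comm (B.indicator _ x) (G ‖x‖), ← mul_assoc, hGw, one_mul]
      _ = ∫⁻ x, F (f x) ∂μ := by
          rw [hμ, lintegral_withDensity_eq_lintegral_mul _ hwmeas
            (show Measurable fun x => F (f x) from hFmeas.comp hf_meas)]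
      _ = ∫⁻ p, F p ∂ρ := by
          rw [hρ, lintegral_map hFmeas hf_meas]
      _ = ∫⁻ ξ, ∫⁻ r, F (ξ, r) ∂(κ ξ) ∂lam := by
          rw [hcomp, Measure.lintegral_compProd hFmeas]
      _ = _ := (lintegral_congr_ae hinner).symm
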